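/- arXiv:2310.10393 — 4 statements merged into one kernel-verified Lean document; each statement's English description precedes it below -/
import Mathlib

section
/- Suppose that for each k ∈ {1,…,K}, ψ_{k,n} → ψ_{k,P} in probability, that Π_{k=1}^K ψ_{k,P} ≠ 0, and that the sequence (Σ_n) is bounded in probability. Then for every α ∈ (0,1), P(R_{n,α}) → 1 as n → ∞; that is, the power of the proposed test converges to one under fixed alternatives. -/
open MeasureTheory ProbabilityTheory Filter

/-- The `p`-th quantile of the standard normal distribution:
`q_p := inf {x : ℝ | p ≤ Φ(x)}` where `Φ` is the standard normal CDF. -/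
noncomputable def stdNormalQuantile (p : ℝ) : ℝ :=
  sInf {x : ℝ | p ≤ ProbabilityTheory.cdf (gaussianReal 0 1) x}

/-- **Theorem 2 (power under fixed alternatives).**
If each estimator `ψn k` converges in probability to `ψP k`, the product of the true parameters
is nonzero, and the sequence of covariance estimators `Sn` is bounded in probability (i.e. for
every `ε > 0` there is `M` with `limsup_n P(‖Sn‖ > M) ≤ ε`), then the rejection probability of
the level-`α` test `R_{n,α} = { n (∏ k ψ_{k,n})² > q_{1-α/2}² γn' Sn γn }` converges to `1`. -/
theorem power_tendsto_one
    {Ω : Type*} [MeasurableSpace Ω]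
    (Pr : Measure Ω) [IsProbabilityMeasure Pr]
    {K : ℕ} (hK : 1 ≤ K)
    (ψP : Fin K → ℝ) (ψn : Fin K → ℕ → Ω → ℝ)
    -- consistency: ψ_{k,n} → ψ_{k,P} in probability
    (hcons : ∀ k, TendstoInMeasure Pr (fun n ω => ψn k n ω) atTop (fun _ => ψP k))
    -- alternative: ∏ₖ ψ_{k,P} ≠ 0
    (halt : ∏ k, ψP k ≠ 0)
    (Sn : ℕ → Ω → Fin K → Fin K → ℝ)
    -- (Sn) is bounded in probability
    (hSbd : ∀ ε : ℝ, 0 < ε → ∃ M : ℝ,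
      Filter.limsup (fun n => Pr {ω | M < ‖Sn n ω‖}) atTop ≤ ENNReal.ofReal ε)
    (α : ℝ) (hα0 : 0 < α) (hα1 : α < 1) :
    Tendsto
      (fun n => (Pr {ω |
          (stdNormalQuantile (1 - α / 2)) ^ 2 *
            (∑ j, ∑ k, (∏ l ∈ Finset.univ.erase j, ψn l n ω) * Sn n ω j k *
              (∏ l ∈ Finset.univ.erase k, ψn l n ω))
          < (n : ℝ) * (∏ k, ψn k n ω) ^ 2 }).toReal)
      atTop (nhds 1) := by
  classical
  set q2 : ℝ := (stdNormalQuantile (1 - α / 2)) ^ 2 with hq2def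
  have hq2nn : 0 ≤ q2 := sq_nonneg _
  set c : ℝ := |∏ k, ψP k| with hcdef
  have hcpos : 0 < c := abs_pos.2 halt
  set A : ℕ → Set Ω := fun n => {ω |
      q2 * (∑ j, ∑ k, (∏ l ∈ Finset.univ.erase j, ψn l n ω) * Sn n ω j k *
              (∏ l ∈ Finset.univ.erase k, ψn l n ω))
        < (n : ℝ) * (∏ k, ψn k n ω) ^ 2} with hA
  show Tendsto (fun n => (Pr (A n)).toReal) atTop (nhds 1)
  -- continuity of the product at ψP
  have hcont : ContinuousAt (fun x : Fin K → ℝ => ∏ k, x k) ψP :=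
    (continuous_finset_prod Finset.univ fun i _ => continuous_apply i).continuousAt
  obtain ⟨δ₀, hδ₀, hδ₀'⟩ := Metric.continuousAt_iff.1 hcont (c / 2) (by positivity)
  set δ : ℝ := min δ₀ 1 with hδdef
  have hδpos : 0 < δ := lt_min hδ₀ one_pos
  have hδ1 : δ ≤ 1 := min_le_right _ _
  set a : ℝ := ‖ψP‖ + 1 with hadef
  have ha1 : (1 : ℝ) ≤ a := le_add_of_nonneg_left (norm_nonneg _)
  have ha0 : (0 : ℝ) ≤ a := by linarith
  set B : ℝ := a ^ K with hBdef
  have hB0 : (0 : ℝ) ≤ B := pow_nonneg ha0 K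
  -- key step : Pr ((A n)ᶜ) → 0
  have key : Tendsto (fun n => Pr ((A n)ᶜ)) atTop (nhds 0) := by
    have h0 : ∀ ε : ℝ, 0 < ε →
        limsup (fun n => Pr ((A n)ᶜ)) atTop ≤ ENNReal.ofReal ε := by
      intro ε hε
      obtain ⟨M, hM⟩ := hSbd (ε / 2) (by linarith)
      set M' : ℝ := max M 0 with hM'def
      have hM'0 : (0 : ℝ) ≤ M' := le_max_right _ _
      set C : ℝ := q2 * ((K : ℝ) * ((K : ℝ) * (B * M' * B))) with hCdef
      obtain ⟨N, hN⟩ := exists_nat_gt (C / ((c / 2) ^ 2))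
      -- pointwise inclusion for n ≥ N+1
      have hsub : ∀ n, N + 1 ≤ n → (A n)ᶜ ⊆
          (⋃ k, {ω | δ ≤ dist (ψn k n ω) (ψP k)}) ∪ {ω | M < ‖Sn n ω‖} := by
        intro n hn ω hω
        by_contra hbad
        simp only [Set.mem_union, Set.mem_iUnion, Set.mem_setOf_eq, not_or, not_exists,
          not_le, not_lt] at hbad
        obtain ⟨hdk, hSle⟩ := hbad
        have hSle' : ‖Sn n ω‖ ≤ M' := hSle.trans (le_max_left _ _)
        -- pi distance
        have hdist : dist (fun k => ψn k n ω) ψP < δ := (dist_pi_lt_iff hδpos).2 hdk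
        -- product close
        have hprod : dist (∏ k, ψn k n ω) (∏ k, ψP k) < c / 2 :=
          hδ₀' (lt_of_lt_of_le hdist (min_le_left _ _))
        have hPlb : c / 2 ≤ |∏ k, ψn k n ω| := by
          have h1 : |∏ k, ψP k| - |∏ k, ψn k n ω| ≤ |(∏ k, ψP k) - ∏ k, ψn k n ω| :=
            abs_sub_abs_le_abs_sub _ _
          rw [Real.dist_eq, abs_sub_comm] at hprod
          linarith [hcdef.le, hcdef.ge]
        have hPsq : (c / 2) ^ 2 ≤ (∏ k, ψn k n ω) ^ 2 := by
          have := pow_le_pow_left₀ (by positivity) hPlb 2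
          rwa [sq_abs] at this
        -- entries of ψn are bounded by a
        have hψb : ∀ l : Fin K, |ψn l n ω| ≤ a := by
          intro l
          have h1 : |ψn l n ω - ψP l| < δ := by
            have := hdk l; rwa [Real.dist_eq] at this
          have h2 : |ψP l| ≤ ‖ψP‖ := by
            have := norm_le_pi_norm ψP l; rwa [Real.norm_eq_abs] at this
          have h3 : |ψn l n ω| - |ψP l| ≤ |ψn l n ω - ψP l| := abs_sub_abs_le_abs_sub _ _
          have : a = ‖ψP‖ + 1 := hadef
          linarith
        -- leave-one-out products bounded by B
        have hγb : ∀ j : Fin K, |∏ l ∈ Finset.univ.erase j, ψn l n ω| ≤ B := by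
          intro j
          calc |∏ l ∈ Finset.univ.erase j, ψn l n ω|
              = ∏ l ∈ Finset.univ.erase j, |ψn l n ω| := Finset.abs_prod _ _
            _ ≤ ∏ _l ∈ Finset.univ.erase j, a :=
                Finset.prod_le_prod (fun l _ => abs_nonneg _) (fun l _ => hψb l)
            _ = a ^ (Finset.univ.erase j).card := Finset.prod_const a
            _ ≤ a ^ K := by
                apply pow_le_pow_right₀ ha1
                calc (Finset.univ.erase j).card ≤ (Finset.univ : Finset (Fin K)).card :=
                      Finset.card_erase_le
                  _ = K := by simp
        -- entries of Sn bounded by M'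
        have hSb : ∀ j k : Fin K, |Sn n ω j k| ≤ M' := by
          intro j k
          have h1 : ‖Sn n ω j‖ ≤ ‖Sn n ω‖ := norm_le_pi_norm _ j
          have h2 : ‖Sn n ω j k‖ ≤ ‖Sn n ω j‖ := norm_le_pi_norm _ k
          rw [Real.norm_eq_abs] at h2
          linarith
        -- bound on the quadratic form
        have hQb : (∑ j, ∑ k, (∏ l ∈ Finset.univ.erase j, ψn l n ω) * Sn n ω j k *
              (∏ l ∈ Finset.univ.erase k, ψn l n ω))
            ≤ (K : ℝ) * ((K : ℝ) * (B * M' * B)) := by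
          have hterm : ∀ j k : Fin K,
              (∏ l ∈ Finset.univ.erase j, ψn l n ω) * Sn n ω j k *
                (∏ l ∈ Finset.univ.erase k, ψn l n ω) ≤ B * M' * B := by
            intro j k
            calc (∏ l ∈ Finset.univ.erase j, ψn l n ω) * Sn n ω j k *
                  (∏ l ∈ Finset.univ.erase k, ψn l n ω)
                ≤ |(∏ l ∈ Finset.univ.erase j, ψn l n ω) * Sn n ω j k *
                  (∏ l ∈ Finset.univ.erase k, ψn l n ω)| := le_abs_self _
              _ = |∏ l ∈ Finset.univ.erase j, ψn l n ω| * |Sn n ω j k| *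
                  |∏ l ∈ Finset.univ.erase k, ψn l n ω| := by rw [abs_mul, abs_mul]
              _ ≤ B * M' * B := by
                  apply mul_le_mul _ (hγb k) (abs_nonneg _) (by positivity)
                  exact mul_le_mul (hγb j) (hSb j k) (abs_nonneg _) hB0
          calc (∑ j, ∑ k, (∏ l ∈ Finset.univ.erase j, ψn l n ω) * Sn n ω j k *
                (∏ l ∈ Finset.univ.erase k, ψn l n ω))
              ≤ ∑ _j : Fin K, ∑ _k : Fin K, (B * M' * B) := by
                apply Finset.sum_le_sum; intro j _
                exact Finset.sum_le_sum fun k _ => hterm j k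
            _ = (K : ℝ) * ((K : ℝ) * (B * M' * B)) := by
                simp [Finset.sum_const, Finset.card_univ, nsmul_eq_mul, mul_assoc]
        -- conclude the contradiction
        have hCn : C < (n : ℝ) * (c / 2) ^ 2 := by
          have hc2 : (0 : ℝ) < (c / 2) ^ 2 := by positivity
          have hNn : (N : ℝ) + 1 ≤ (n : ℝ) := by exact_mod_cast hn
          have := (div_lt_iff₀ hc2).1 hN
          nlinarith
        have hfin : q2 * (∑ j, ∑ k, (∏ l ∈ Finset.univ.erase j, ψn l n ω) * Sn n ω j k *
              (∏ l ∈ Finset.univ.erase k, ψn l n ω)) < (n : ℝ) * (∏ k, ψn k n ω) ^ 2 := by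
          have h1 : q2 * (∑ j, ∑ k, (∏ l ∈ Finset.univ.erase j, ψn l n ω) * Sn n ω j k *
              (∏ l ∈ Finset.univ.erase k, ψn l n ω)) ≤ C := by
            rw [hCdef]
            exact mul_le_mul_of_nonneg_left hQb hq2nn
          have h2 : (n : ℝ) * (c / 2) ^ 2 ≤ (n : ℝ) * (∏ k, ψn k n ω) ^ 2 :=
            mul_le_mul_of_nonneg_left hPsq (Nat.cast_nonneg n)
          linarith
        exact hω hfin
      -- measure estimates
      have hev : ∀ᶠ n in atTop, Pr ((A n)ᶜ) ≤
          (∑ k, Pr {ω | δ ≤ dist (ψn k n ω) (ψP k)}) + Pr {ω | M < ‖Sn n ω‖} := by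
        filter_upwards [eventually_ge_atTop (N + 1)] with n hn
        calc Pr ((A n)ᶜ)
            ≤ Pr ((⋃ k, {ω | δ ≤ dist (ψn k n ω) (ψP k)}) ∪ {ω | M < ‖Sn n ω‖}) :=
              measure_mono (hsub n hn)
          _ ≤ Pr (⋃ k, {ω | δ ≤ dist (ψn k n ω) (ψP k)}) + Pr {ω | M < ‖Sn n ω‖} :=
              measure_union_le _ _
          _ ≤ (∑ k, Pr {ω | δ ≤ dist (ψn k n ω) (ψP k)}) + Pr {ω | M < ‖Sn n ω‖} :=
              add_le_add_left (measure_iUnion_fintype_le _ _) _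
      have hsum0 : Tendsto (fun n => ∑ k, Pr {ω | δ ≤ dist (ψn k n ω) (ψP k)})
          atTop (nhds 0) := by
        have := tendsto_finset_sum (Finset.univ : Finset (Fin K))
          (fun k _ => tendstoInMeasure_iff_dist.1 (hcons k) δ hδpos)
        simpa using this
      have hη : ∀ᶠ n in atTop,
          (∑ k, Pr {ω | δ ≤ dist (ψn k n ω) (ψP k)}) ≤ ENNReal.ofReal (ε / 2) := by
        have hpos : (0 : ENNReal) < ENNReal.ofReal (ε / 2) :=
          ENNReal.ofReal_pos.2 (by linarith)
        exact (hsum0.eventually_lt_const hpos).mono fun n hn => hn.le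
      have hev2 : ∀ᶠ n in atTop, Pr ((A n)ᶜ) ≤
          ENNReal.ofReal (ε / 2) + Pr {ω | M < ‖Sn n ω‖} := by
        filter_upwards [hev, hη] with n h1 h2
        exact h1.trans (add_le_add_left h2 _)
      calc limsup (fun n => Pr ((A n)ᶜ)) atTop
          ≤ limsup (fun n => ENNReal.ofReal (ε / 2) + Pr {ω | M < ‖Sn n ω‖}) atTop :=
            limsup_le_limsup hev2
        _ = ENNReal.ofReal (ε / 2) + limsup (fun n => Pr {ω | M < ‖Sn n ω‖}) atTop :=
            limsup_const_add atTop _ _ isBounded_le_of_top isCobounded_le_of_bot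
        _ ≤ ENNReal.ofReal (ε / 2) + ENNReal.ofReal (ε / 2) := add_le_add_right hM _
        _ = ENNReal.ofReal ε := by
            rw [← ENNReal.ofReal_add (by linarith) (by linarith)]
            norm_num
    have hls : limsup (fun n => Pr ((A n)ᶜ)) atTop = 0 := by
      refine le_antisymm ?_ zero_le
      refine ENNReal.le_of_forall_pos_le_add (fun ε hε _ => ?_)
      have := h0 ε (by exact_mod_cast hε)
      simpa [ENNReal.ofReal_coe_nnreal] using this
    have hlf : liminf (fun n => Pr ((A n)ᶜ)) atTop = 0 :=
      le_antisymm (hls ▸ liminf_le_limsup) zero_le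
    exact tendsto_of_liminf_eq_limsup hlf hls
  -- conclude : Pr (A n).toReal → 1
  have hv : Tendsto (fun n => (Pr ((A n)ᶜ)).toReal) atTop (nhds 0) := by
    have h := (ENNReal.tendsto_toReal (by simp)).comp key
    exact h
  have hlow : ∀ n, 1 - (Pr ((A n)ᶜ)).toReal ≤ (Pr (A n)).toReal := by
    intro n
    have h1 : (1 : ENNReal) ≤ Pr (A n) + Pr ((A n)ᶜ) := by
      calc (1 : ENNReal) = Pr Set.univ := (measure_univ).symm
        _ = Pr (A n ∪ (A n)ᶜ) := by rw [Set.union_compl_self]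
        _ ≤ Pr (A n) + Pr ((A n)ᶜ) := measure_union_le _ _
    have h2 := ENNReal.toReal_mono
      (ENNReal.add_ne_top.2 ⟨measure_ne_top _ _, measure_ne_top _ _⟩) h1
    rw [ENNReal.toReal_add (measure_ne_top _ _) (measure_ne_top _ _)] at h2
    simp only [ENNReal.toReal_one] at h2
    linarith
  have hup : ∀ n, (Pr (A n)).toReal ≤ 1 := by
    intro n
    have h3 : Pr (A n) ≤ 1 := prob_le_one
    have := ENNReal.toReal_mono ENNReal.one_ne_top h3
    simpa using this
  have hl : Tendsto (fun n => 1 - (Pr ((A n)ᶜ)).toReal) atTop (nhds 1) := by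
    have := (tendsto_const_nhds (x := (1 : ℝ)) (f := atTop)).sub hv
    simpa using this
  exact tendsto_of_tendsto_of_tendsto_of_le_of_le hl tendsto_const_nhds hlow hup
end

section
/- The instrumental variable (Wald) influence function has mean zero: E[ ( (Y − μ_Z)·(π_1 − π_0) − (A − π_Z)·(μ_1 − μ_0) ) · ( Z/ζ − (1−Z)/(1−ζ) ) / (π_1 − π_0)^2 ] = 0. -/
open MeasureTheory ProbabilityTheory Filter

/-- **The instrumental variable (Wald) influence function has mean zero.**
With binary instrument `Z` and treatment `A`, `ζ = P(Z = 1) ∈ (0,1)`,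
`μ_z = E[Y·1{Z=z}]/P(Z=z)` and `π_z = E[A·1{Z=z}]/P(Z=z)` for `z ∈ {0,1}` with `π₁ ≠ π₀`,
we have
`E[((Y - μ_Z)(π₁ - π₀) - (A - π_Z)(μ₁ - μ₀))·(Z/ζ - (1-Z)/(1-ζ))/(π₁ - π₀)²] = 0`.
(Since `Z` is `{0,1}`-valued, `1{Z=1} = Z` and `1{Z=0} = 1 - Z`, and
`μ_Z = Z·μ₁ + (1-Z)·μ₀`, `π_Z = Z·π₁ + (1-Z)·π₀`.) -/
theorem iv_influence_function_mean_zero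
    {Ω : Type*} [MeasurableSpace Ω]
    (Pr : Measure Ω) [IsProbabilityMeasure Pr]
    (Z : Ω → ℝ) (hZ : Measurable Z) (hZ01 : ∀ ω, Z ω = 0 ∨ Z ω = 1)
    (A : Ω → ℝ) (hA : Measurable A) (hA01 : ∀ ω, A ω = 0 ∨ A ω = 1)
    (Y : Ω → ℝ) (hY : Integrable Y Pr)
    (ζ : ℝ) (hζ : ζ = (Pr {ω | Z ω = 1}).toReal) (hζ0 : 0 < ζ) (hζ1 : ζ < 1)
    (μ1 μ0 π1 π0 : ℝ)
    (hμ1 : μ1 = (∫ ω, Y ω * Z ω ∂Pr) / ζ)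
    (hμ0 : μ0 = (∫ ω, Y ω * (1 - Z ω) ∂Pr) / (1 - ζ))
    (hπ1 : π1 = (∫ ω, A ω * Z ω ∂Pr) / ζ)
    (hπ0 : π0 = (∫ ω, A ω * (1 - Z ω) ∂Pr) / (1 - ζ))
    (hrel : π1 ≠ π0) :
    ∫ ω, ((Y ω - (Z ω * μ1 + (1 - Z ω) * μ0)) * (π1 - π0)
        - (A ω - (Z ω * π1 + (1 - Z ω) * π0)) * (μ1 - μ0))
      * (Z ω / ζ - (1 - Z ω) / (1 - ζ)) / (π1 - π0) ^ 2 ∂Pr = 0 := by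
  have hζne : ζ ≠ 0 := ne_of_gt hζ0
  have h1ζ : (1:ℝ) - ζ ≠ 0 := by linarith
  have hdne : (π1 - π0) ≠ 0 := sub_ne_zero.mpr hrel
  -- integrability
  have hZsm : AEStronglyMeasurable Z Pr := hZ.aestronglyMeasurable
  have hZbd : ∃ C, ∀ ω, ‖Z ω‖ ≤ C := ⟨1, fun ω => by rcases hZ01 ω with h | h <;> simp [h]⟩
  have h1Zbd : ∃ C, ∀ ω, ‖1 - Z ω‖ ≤ C := ⟨1, fun ω => by rcases hZ01 ω with h | h <;> simp [h]⟩
  have hAbd : ∃ C, ∀ ω, ‖A ω‖ ≤ C := ⟨1, fun ω => by rcases hA01 ω with h | h <;> simp [h]⟩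
  have hYZ : Integrable (fun ω => Y ω * Z ω) Pr := by
    have := Integrable.bdd_mul hY hZsm (Filter.Eventually.of_forall hZbd.choose_spec)
    exact this.congr (Filter.Eventually.of_forall fun ω => mul_comm _ _)
  have hY1Z : Integrable (fun ω => Y ω * (1 - Z ω)) Pr := by
    have := Integrable.bdd_mul hY ((measurable_const.sub hZ).aestronglyMeasurable) (Filter.Eventually.of_forall h1Zbd.choose_spec)
    exact this.congr (Filter.Eventually.of_forall fun ω => mul_comm _ _)
  have hone : Integrable (fun _ : Ω => (1:ℝ)) Pr := integrable_const 1
  have hAint : Integrable A Pr := by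
    have := Integrable.bdd_mul hone hA.aestronglyMeasurable (Filter.Eventually.of_forall hAbd.choose_spec)
    simpa using this
  have hAZ : Integrable (fun ω => A ω * Z ω) Pr := by
    have := Integrable.bdd_mul hAint hZsm (Filter.Eventually.of_forall hZbd.choose_spec)
    exact this.congr (Filter.Eventually.of_forall fun ω => mul_comm _ _)
  have hA1Z : Integrable (fun ω => A ω * (1 - Z ω)) Pr := by
    have := Integrable.bdd_mul hAint ((measurable_const.sub hZ).aestronglyMeasurable) (Filter.Eventually.of_forall h1Zbd.choose_spec)
    exact this.congr (Filter.Eventually.of_forall fun ω => mul_comm _ _)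
  have hZint : Integrable Z Pr := by
    have := Integrable.bdd_mul hone hZsm (Filter.Eventually.of_forall hZbd.choose_spec)
    simpa using this
  have h1Zint : Integrable (fun ω => 1 - Z ω) Pr := (integrable_const 1).sub hZint
  -- value of ∫ Z
  have hZind : Z = Set.indicator {ω | Z ω = 1} (fun _ => (1:ℝ)) := by
    funext ω
    rcases hZ01 ω with h | h <;> simp [Set.indicator, h]
  have hmeas : MeasurableSet {ω | Z ω = 1} := hZ (measurableSet_singleton 1)
  have hIZ : ∫ ω, Z ω ∂Pr = ζ := by
    rw [show (fun ω => Z ω) = Z from rfl, hZind, integral_indicator_const _ hmeas, hζ]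
    simp
    rfl
  have hI1Z : ∫ ω, (1 - Z ω) ∂Pr = 1 - ζ := by
    rw [integral_sub (integrable_const 1) hZint, hIZ]
    simp
  -- values of the other integrals
  have hIYZ : ∫ ω, Y ω * Z ω ∂Pr = μ1 * ζ := by
    field_simp at hμ1; linarith [hμ1]
  have hIY1Z : ∫ ω, Y ω * (1 - Z ω) ∂Pr = μ0 * (1 - ζ) := by
    field_simp at hμ0; linarith [hμ0]
  have hIAZ : ∫ ω, A ω * Z ω ∂Pr = π1 * ζ := by
    field_simp at hπ1; linarith [hπ1]
  have hIA1Z : ∫ ω, A ω * (1 - Z ω) ∂Pr = π0 * (1 - ζ) := by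
    field_simp at hπ0; linarith [hπ0]
  -- coefficients
  set d := (π1 - π0) ^ 2 with hd
  have hdne2 : d ≠ 0 := pow_ne_zero _ hdne
  set a1 := (π1 - π0) / ζ / d with ha1
  set a2 := -((π1 - π0) / (1 - ζ) / d) with ha2
  set a3 := -((μ1 - μ0) / ζ / d) with ha3
  set a4 := (μ1 - μ0) / (1 - ζ) / d with ha4
  set a5 := (-(μ1 * (π1 - π0)) + π1 * (μ1 - μ0)) / ζ / d with ha5
  set a6 := (μ0 * (π1 - π0) - π0 * (μ1 - μ0)) / (1 - ζ) / d with ha6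
  have hfun : ∀ ω, ((Y ω - (Z ω * μ1 + (1 - Z ω) * μ0)) * (π1 - π0)
        - (A ω - (Z ω * π1 + (1 - Z ω) * π0)) * (μ1 - μ0))
      * (Z ω / ζ - (1 - Z ω) / (1 - ζ)) / (π1 - π0) ^ 2
      = a1 * (Y ω * Z ω) + (a2 * (Y ω * (1 - Z ω)) + (a3 * (A ω * Z ω)
        + (a4 * (A ω * (1 - Z ω)) + (a5 * Z ω + a6 * (1 - Z ω))))) := by
    intro ω
    rw [ha1, ha2, ha3, ha4, ha5, ha6, hd]
    rcases hZ01 ω with h | h <;> rw [h] <;> field_simp <;> ring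
  rw [integral_congr_ae (Filter.Eventually.of_forall hfun)]
  have i1 := hYZ.const_mul a1
  have i2 := hY1Z.const_mul a2
  have i3 := hAZ.const_mul a3
  have i4 := hA1Z.const_mul a4
  have i5 := hZint.const_mul a5
  have i6 := h1Zint.const_mul a6
  have i56 : Integrable (fun x => a5 * Z x + a6 * (1 - Z x)) Pr := i5.add i6
  have i46 : Integrable (fun x => a4 * (A x * (1 - Z x)) + (a5 * Z x + a6 * (1 - Z x))) Pr := i4.add i56
  have i36 : Integrable (fun x => a3 * (A x * Z x) + (a4 * (A x * (1 - Z x)) + (a5 * Z x + a6 * (1 - Z x)))) Pr := i3.add i46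
  have i26 : Integrable (fun x => a2 * (Y x * (1 - Z x)) + (a3 * (A x * Z x) + (a4 * (A x * (1 - Z x)) + (a5 * Z x + a6 * (1 - Z x))))) Pr := i2.add i36
  rw [integral_add i1 i26,
      integral_add i2 i36,
      integral_add i3 i46,
      integral_add i4 i56,
      integral_add i5 i6,
      integral_const_mul, integral_const_mul, integral_const_mul,
      integral_const_mul, integral_const_mul, integral_const_mul,
      hIYZ, hIY1Z, hIAZ, hIA1Z, hIZ, hI1Z,
      ha1, ha2, ha3, ha4, ha5, ha6, hd]
  field_simp
  ring
end

section
/- Under conditional ignorability, consistency, and positivity, the average causal effect is identified by the backdoor formula: E[Y_1 − Y_0] = E[ E[A·Y | 𝒢]/π − E[(1−A)·Y | 𝒢]/(1−π) ]. -/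
open MeasureTheory ProbabilityTheory Filter

/-- Conditional independence of `f` and `g` given the sub-σ-algebra `m`, characterized via
bounded measurable test functions: for all bounded measurable `φ ψ`,
`E[φ(f) ψ(g) | m] = E[φ(f) | m] · E[ψ(g) | m]` almost everywhere. -/
def CondIndepFun' {Ω α β : Type*} {m0 : MeasurableSpace Ω} [MeasurableSpace α]
    [MeasurableSpace β] (m : MeasurableSpace Ω) (μ : @MeasureTheory.Measure Ω m0)
    (f : Ω → α) (g : Ω → β) : Prop :=
  ∀ (φ : α → ℝ) (ψ : β → ℝ), Measurable φ → Measurable ψ →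
    (∃ B : ℝ, ∀ x, |φ x| ≤ B) → (∃ B : ℝ, ∀ x, |ψ x| ≤ B) →
    (μ[fun ω => φ (f ω) * ψ (g ω)|m]) =ᵐ[μ]
      fun ω => (μ[fun ω' => φ (f ω')|m]) ω * (μ[fun ω' => ψ (g ω')|m]) ω

section Aux

/-- Truncation of a real number to the interval `[-n, n]`. -/
noncomputable def trunc (n : ℕ) (y : ℝ) : ℝ := max (-(n : ℝ)) (min y n)

lemma trunc_measurable (n : ℕ) : Measurable (trunc n) :=
  measurable_const.max (measurable_id.min measurable_const)

lemma trunc_abs_le (n : ℕ) (y : ℝ) : |trunc n y| ≤ |y| := by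
  rw [abs_le]
  constructor
  · refine le_trans ?_ (le_max_right _ _)
    exact le_min (neg_abs_le y) ((neg_nonpos.2 (abs_nonneg y)).trans (Nat.cast_nonneg n))
  · exact max_le ((neg_nonpos.2 (Nat.cast_nonneg n)).trans (abs_nonneg y))
      ((min_le_left _ _).trans (le_abs_self y))

lemma trunc_abs_le' (n : ℕ) (y : ℝ) : |trunc n y| ≤ (n : ℝ) := by
  rw [abs_le]
  exact ⟨le_max_left _ _, max_le (neg_le_self (Nat.cast_nonneg n)) (min_le_right _ _)⟩

lemma trunc_tendsto (y : ℝ) : Tendsto (fun n : ℕ => trunc n y) atTop (nhds y) := by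
  refine tendsto_const_nhds.congr' ?_
  filter_upwards [eventually_ge_atTop ⌈|y|⌉₊] with n hn
  have h : |y| ≤ (n : ℝ) := le_trans (Nat.le_ceil _) (Nat.cast_le.2 hn)
  have h1 : y ≤ (n : ℝ) := le_trans (le_abs_self y) h
  have h2 : -(n : ℝ) ≤ y := by have := neg_abs_le y; linarith
  unfold trunc
  rw [min_eq_left h1, max_eq_right h2]

/-- Clamp to `[0,1]`. -/
noncomputable def clamp01 (a : ℝ) : ℝ := max 0 (min a 1)

lemma clamp01_measurable : Measurable clamp01 :=
  measurable_const.max (measurable_id.min measurable_const)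

lemma clamp01_abs_le (a : ℝ) : |clamp01 a| ≤ 1 := by
  rw [abs_le]
  exact ⟨le_trans (by norm_num) (le_max_left 0 _), max_le zero_le_one (min_le_right _ _)⟩

@[simp] lemma clamp01_zero : clamp01 0 = 0 := by norm_num [clamp01]
@[simp] lemma clamp01_one : clamp01 1 = 1 := by norm_num [clamp01]

/-- Key computation: if `B` is a `{0,1}`-valued variable, `Z` an integrable variable,
`ρ` a `𝒢`-measurable version of `E[B|𝒢]` bounded below by `ε > 0`, and `Z`, `B` satisfy
the conditional independence property via bounded test functions, then
`∫ E[B·Z | 𝒢] / ρ = ∫ Z`. -/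
lemma key_identity {Ω : Type*} {m0 : MeasurableSpace Ω} (Pr : Measure Ω)
    [IsProbabilityMeasure Pr]
    (𝒢 : MeasurableSpace Ω) (h𝒢 : 𝒢 ≤ m0)
    (B : Ω → ℝ) (hBm : Measurable[m0] B) (hB01 : ∀ ω, B ω = 0 ∨ B ω = 1)
    (Z : Ω → ℝ) (hZm : Measurable[m0] Z) (hZ : Integrable Z Pr)
    (ρ : Ω → ℝ) (hρm : StronglyMeasurable[𝒢] ρ) (hρ : ρ =ᵐ[Pr] Pr[B|𝒢])
    (ε : ℝ) (hε : 0 < ε) (hρlb : ∀ᵐ ω ∂Pr, ε ≤ ρ ω)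
    (hind : ∀ (φ ψ : ℝ → ℝ), Measurable φ → Measurable ψ →
      (∃ Bd : ℝ, ∀ x, |φ x| ≤ Bd) → (∃ Bd : ℝ, ∀ x, |ψ x| ≤ Bd) →
      (Pr[fun ω => φ (Z ω) * ψ (B ω)|𝒢]) =ᵐ[Pr]
        fun ω => (Pr[fun ω' => φ (Z ω')|𝒢]) ω * (Pr[fun ω' => ψ (B ω')|𝒢]) ω) :
    ∫ ω, (Pr[fun ω' => B ω' * Z ω'|𝒢]) ω / ρ ω ∂Pr = ∫ ω, Z ω ∂Pr := by
  have hBbd : ∀ ω, ‖B ω‖ ≤ 1 := fun ω => by rcases hB01 ω with h | h <;> simp [h]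
  have hBae : AEStronglyMeasurable[m0] B Pr := Measurable.aestronglyMeasurable (μ := Pr) hBm
  have hgint : Integrable (fun ω => B ω * Z ω) Pr :=
    hZ.bdd_mul hBae (Eventually.of_forall hBbd)
  have hinv_bd : ∀ᵐ ω ∂Pr, ‖(ρ ω)⁻¹‖ ≤ ε⁻¹ := by
    filter_upwards [hρlb] with ω h
    rw [Real.norm_eq_abs, abs_inv, abs_of_pos (hε.trans_le h)]
    exact inv_anti₀ hε h
  have hinvm : StronglyMeasurable[𝒢] (fun ω => (ρ ω)⁻¹) := hρm.measurable.inv.stronglyMeasurable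
  have hinvm0 : AEStronglyMeasurable[m0] (fun ω => (ρ ω)⁻¹) Pr :=
    (hinvm.mono h𝒢).aestronglyMeasurable
  -- pull-out of `(ρ ·)⁻¹` through condexp, at the level of integrals
  have pull : ∀ h : Ω → ℝ, Integrable h Pr →
      ∫ ω, (ρ ω)⁻¹ * (Pr[h|𝒢]) ω ∂Pr = ∫ ω, (ρ ω)⁻¹ * h ω ∂Pr := by
    intro h hint
    have h1 : Integrable (fun ω => (ρ ω)⁻¹ * h ω) Pr := hint.bdd_mul hinvm0 hinv_bd
    have h2 : Pr[(fun ω => (ρ ω)⁻¹) * h|𝒢] =ᵐ[Pr] (fun ω => (ρ ω)⁻¹) * Pr[h|𝒢] :=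
      condExp_mul_of_stronglyMeasurable_left hinvm h1 hint
    calc ∫ ω, (ρ ω)⁻¹ * (Pr[h|𝒢]) ω ∂Pr
        = ∫ ω, (Pr[(fun ω' => (ρ ω')⁻¹) * h|𝒢]) ω ∂Pr := by
          refine (integral_congr_ae (h2.mono fun ω hω => ?_)).symm
          simpa using hω
      _ = ∫ ω, ((fun ω' => (ρ ω')⁻¹) * h) ω ∂Pr := integral_condExp h𝒢
      _ = ∫ ω, (ρ ω)⁻¹ * h ω ∂Pr := rfl
  have step1 : ∫ ω, (Pr[fun ω' => B ω' * Z ω'|𝒢]) ω / ρ ω ∂Pr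
      = ∫ ω, (ρ ω)⁻¹ * (B ω * Z ω) ∂Pr := by
    rw [← pull _ hgint]
    exact integral_congr_ae (Eventually.of_forall fun ω =>
      (div_eq_mul_inv _ _).trans (mul_comm _ _))
  have step2 : ∀ n : ℕ, ∫ ω, (ρ ω)⁻¹ * (B ω * trunc n (Z ω)) ∂Pr
      = ∫ ω, trunc n (Z ω) ∂Pr := by
    intro n
    have htm : Measurable (trunc n) := trunc_measurable n
    have htint : Integrable (fun ω => trunc n (Z ω)) Pr := by
      refine hZ.mono (Measurable.aestronglyMeasurable (μ := Pr) (htm.comp hZm))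
        (Eventually.of_forall fun ω => ?_)
      simpa [Real.norm_eq_abs] using trunc_abs_le n (Z ω)
    have hBtint : Integrable (fun ω => B ω * trunc n (Z ω)) Pr :=
      htint.bdd_mul hBae (Eventually.of_forall hBbd)
    have hci := hind (trunc n) clamp01 htm clamp01_measurable
      ⟨(n : ℝ), trunc_abs_le' n⟩ ⟨1, clamp01_abs_le⟩
    have hEq : (fun ω => trunc n (Z ω) * clamp01 (B ω))
        = fun ω => B ω * trunc n (Z ω) := by
      funext ω; rcases hB01 ω with h | h <;> simp [h, mul_comm]
    have hEq2 : (fun ω => clamp01 (B ω)) = B := by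
      funext ω; rcases hB01 ω with h | h <;> simp [h]
    rw [hEq, hEq2] at hci
    calc ∫ ω, (ρ ω)⁻¹ * (B ω * trunc n (Z ω)) ∂Pr
        = ∫ ω, (ρ ω)⁻¹ * (Pr[fun ω' => B ω' * trunc n (Z ω')|𝒢]) ω ∂Pr :=
          (pull _ hBtint).symm
      _ = ∫ ω, (Pr[fun ω' => trunc n (Z ω')|𝒢]) ω ∂Pr := by
          refine integral_congr_ae ?_
          filter_upwards [hci, hρ, hρlb] with ω h1 h2 h3
          have hne : ρ ω ≠ 0 := (hε.trans_le h3).ne'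
          rw [h1, ← h2]
          field_simp
      _ = ∫ ω, trunc n (Z ω) ∂Pr := integral_condExp h𝒢
  have hbound : Integrable (fun ω => ε⁻¹ * |Z ω|) Pr := hZ.abs.const_mul _
  have lim1 : Tendsto (fun n : ℕ => ∫ ω, (ρ ω)⁻¹ * (B ω * trunc n (Z ω)) ∂Pr) atTop
      (nhds (∫ ω, (ρ ω)⁻¹ * (B ω * Z ω) ∂Pr)) := by
    refine tendsto_integral_of_dominated_convergence (fun ω => ε⁻¹ * |Z ω|)
      (fun n => ?_) hbound (fun n => ?_) ?_
    · exact hinvm0.mul (hBae.mul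
        (Measurable.aestronglyMeasurable (μ := Pr) ((trunc_measurable n).comp hZm)))
    · filter_upwards [hinv_bd] with ω h
      have h3 : ‖trunc n (Z ω)‖ ≤ |Z ω| := by
        simpa [Real.norm_eq_abs] using trunc_abs_le n (Z ω)
      have h2 : ‖B ω * trunc n (Z ω)‖ ≤ |Z ω| := by
        rw [norm_mul]
        calc ‖B ω‖ * ‖trunc n (Z ω)‖ ≤ 1 * |Z ω| := mul_le_mul (hBbd ω) h3 (norm_nonneg _) zero_le_one
          _ = |Z ω| := one_mul _
      rw [norm_mul]
      exact mul_le_mul h h2 (norm_nonneg _) (inv_nonneg.2 hε.le)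
    · exact Eventually.of_forall fun ω =>
        (((trunc_tendsto (Z ω)).const_mul (B ω)).const_mul ((ρ ω)⁻¹))
  have lim2 : Tendsto (fun n : ℕ => ∫ ω, trunc n (Z ω) ∂Pr) atTop
      (nhds (∫ ω, Z ω ∂Pr)) := by
    refine tendsto_integral_of_dominated_convergence (fun ω => |Z ω|)
      (fun n => Measurable.aestronglyMeasurable (μ := Pr) ((trunc_measurable n).comp hZm)) hZ.abs
      (fun n => Eventually.of_forall fun ω => ?_) ?_
    · simpa [Real.norm_eq_abs] using trunc_abs_le n (Z ω)
    · exact Eventually.of_forall fun ω => trunc_tendsto (Z ω)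
  have : ∫ ω, (ρ ω)⁻¹ * (B ω * Z ω) ∂Pr = ∫ ω, Z ω ∂Pr :=
    tendsto_nhds_unique (by simpa only [step2] using lim1) lim2
  rw [step1, this]

end Aux

/-- **Identification of the average causal effect by the backdoor formula.**
Under consistency (`Y = A·Y₁ + (1-A)·Y₀`), conditional ignorability of each potential outcome
given `𝒢 = σ(C)`, and positivity of the propensity score `π = E[A | 𝒢]`, the average causal
effect is identified: `E[Y₁ - Y₀] = E[ E[A·Y | 𝒢]/π - E[(1-A)·Y | 𝒢]/(1-π) ]`. -/
theorem backdoor_identification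
    {Ω 𝓒 : Type*} [MeasurableSpace Ω] [MeasurableSpace 𝓒] [StandardBorelSpace 𝓒]
    (Pr : Measure Ω) [IsProbabilityMeasure Pr]
    (C : Ω → 𝓒) (hC : Measurable C)
    (A : Ω → ℝ) (hA : Measurable A) (hA01 : ∀ ω, A ω = 0 ∨ A ω = 1)
    (Y0 Y1 : Ω → ℝ) (hY0m : Measurable Y0) (hY1m : Measurable Y1)
    (hY0 : Integrable Y0 Pr) (hY1 : Integrable Y1 Pr)
    -- consistency
    (Y : Ω → ℝ) (hYdef : Y = fun ω => A ω * Y1 ω + (1 - A ω) * Y0 ω)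
    (𝒢 : MeasurableSpace Ω) (h𝒢 : 𝒢 = MeasurableSpace.comap C inferInstance)
    (π : Ω → ℝ) (hπ : π = Pr[A|𝒢])
    -- positivity: ε ≤ π ≤ 1 - ε a.s. for some ε > 0
    (hpos : ∃ ε : ℝ, 0 < ε ∧ ∀ᵐ ω ∂Pr, ε ≤ π ω ∧ π ω ≤ 1 - ε)
    -- conditional ignorability
    (hig1 : CondIndepFun' 𝒢 Pr Y1 A)
    (hig0 : CondIndepFun' 𝒢 Pr Y0 A) :
    ∫ ω, (Y1 ω - Y0 ω) ∂Pr
      = ∫ ω, ((Pr[fun ω' => A ω' * Y ω'|𝒢]) ω / π ω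
          - (Pr[fun ω' => (1 - A ω') * Y ω'|𝒢]) ω / (1 - π ω)) ∂Pr := by
  obtain ⟨ε, hε, hbd⟩ := hpos
  have h𝒢le := h𝒢.trans_le hC.comap_le
  -- rewrite the observed-outcome expressions using consistency and `A ∈ {0,1}`
  have hAY : (fun ω' => A ω' * Y ω') = fun ω' => A ω' * Y1 ω' := by
    funext ω
    rcases hA01 ω with h | h
    · simp [hYdef, h]
    · simp [hYdef, h]
  have hA'Y : (fun ω' => (1 - A ω') * Y ω') = fun ω' => (1 - A ω') * Y0 ω' := by
    funext ω
    rcases hA01 ω with h | h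
    · simp [hYdef, h]
    · simp [hYdef, h]
  rw [hAY, hA'Y]
  -- propensity score facts
  have hπm : StronglyMeasurable[𝒢] π := hπ ▸ stronglyMeasurable_condExp
  have hπ_ae : π =ᵐ[Pr] Pr[A|𝒢] := by rw [hπ]
  have hπlb : ∀ᵐ ω ∂Pr, ε ≤ π ω := hbd.mono fun ω h => h.1
  have hπub : ∀ᵐ ω ∂Pr, ε ≤ 1 - π ω := hbd.mono fun ω h => by linarith [h.2]
  have hAint : Integrable A Pr := by
    refine Integrable.mono' (integrable_const (1 : ℝ)) hA.aestronglyMeasurable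
      (Eventually.of_forall fun ω => ?_)
    rcases hA01 ω with h | h <;> simp [h]
  have hρ0m : StronglyMeasurable[𝒢] (fun ω => 1 - π ω) :=
    stronglyMeasurable_const.sub hπm
  have hρ0 : (fun ω => 1 - π ω) =ᵐ[Pr] Pr[fun ω => 1 - A ω|𝒢] := by
    have hsub : Pr[(fun _ => (1:ℝ)) - A|𝒢] =ᵐ[Pr] Pr[fun _ => (1:ℝ)|𝒢] - Pr[A|𝒢] :=
      condExp_sub (integrable_const _) hAint 𝒢
    have hcst : Pr[fun _ => (1:ℝ)|𝒢] = fun _ => (1:ℝ) := condExp_const (μ := Pr) h𝒢le (1:ℝ)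
    filter_upwards [hsub, hπ_ae] with ω h1 h2
    have : ((fun _ => (1:ℝ)) - A) = fun ω => 1 - A ω := rfl
    rw [← this, h1, hcst]
    simp [h2]
  -- conditional independence in the needed form
  have hind1 := hig1
  have hind0 : ∀ (φ ψ : ℝ → ℝ), Measurable φ → Measurable ψ →
      (∃ Bd : ℝ, ∀ x, |φ x| ≤ Bd) → (∃ Bd : ℝ, ∀ x, |ψ x| ≤ Bd) →
      (Pr[fun ω => φ (Y0 ω) * ψ (1 - A ω)|𝒢]) =ᵐ[Pr]
        fun ω => (Pr[fun ω' => φ (Y0 ω')|𝒢]) ω * (Pr[fun ω' => ψ (1 - A ω')|𝒢]) ω := by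
    intro φ ψ hφ hψ hbφ hbψ
    obtain ⟨Bd, hBd⟩ := hbψ
    exact hig0 φ (fun a => ψ (1 - a)) hφ (hψ.comp (measurable_const.sub measurable_id))
      hbφ ⟨Bd, fun x => hBd _⟩
  -- the two key identities
  have h1 : ∫ ω, (Pr[fun ω' => A ω' * Y1 ω'|𝒢]) ω / π ω ∂Pr = ∫ ω, Y1 ω ∂Pr :=
    @key_identity Ω _ Pr _ 𝒢 h𝒢le A hA hA01 Y1 hY1m hY1 π hπm hπ_ae ε hε hπlb hind1
  have hB0 : ∀ ω, (1 - A ω : ℝ) = 0 ∨ (1 - A ω : ℝ) = 1 := fun ω => by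
    rcases hA01 ω with h | h <;> simp [h]
  have h0 : ∫ ω, (Pr[fun ω' => (1 - A ω') * Y0 ω'|𝒢]) ω / (1 - π ω) ∂Pr
      = ∫ ω, Y0 ω ∂Pr :=
    @key_identity Ω _ Pr _ 𝒢 h𝒢le (fun ω => 1 - A ω) (measurable_const.sub hA) hB0
      Y0 hY0m hY0 (fun ω => 1 - π ω) hρ0m hρ0 ε hε hπub hind0
  -- integrability of the two terms on the right-hand side
  have hπinv_bd : ∀ᵐ ω ∂Pr, ‖(π ω)⁻¹‖ ≤ ε⁻¹ := by
    filter_upwards [hπlb] with ω h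
    rw [Real.norm_eq_abs, abs_inv, abs_of_pos (hε.trans_le h)]
    exact inv_anti₀ hε h
  have hρ0inv_bd : ∀ᵐ ω ∂Pr, ‖(1 - π ω)⁻¹‖ ≤ ε⁻¹ := by
    filter_upwards [hπub] with ω h
    rw [Real.norm_eq_abs, abs_inv, abs_of_pos (hε.trans_le h)]
    exact inv_anti₀ hε h
  have hT1int : Integrable
      (fun ω => (Pr[fun ω' => A ω' * Y1 ω'|𝒢]) ω / π ω) Pr := by
    have := (integrable_condExp (m := 𝒢) (f := fun ω' => A ω' * Y1 ω')).bdd_mul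
      ((hπm.measurable.inv.stronglyMeasurable.mono h𝒢le).aestronglyMeasurable) hπinv_bd
    exact this.congr (Eventually.of_forall fun ω =>
      (mul_comm _ _).trans (div_eq_mul_inv _ _).symm)
  have hT0int : Integrable
      (fun ω => (Pr[fun ω' => (1 - A ω') * Y0 ω'|𝒢]) ω / (1 - π ω)) Pr := by
    have := (integrable_condExp (m := 𝒢) (f := fun ω' => (1 - A ω') * Y0 ω')).bdd_mul
      ((hρ0m.measurable.inv.stronglyMeasurable.mono h𝒢le).aestronglyMeasurable) hρ0inv_bd
    exact this.congr (Eventually.of_forall fun ω =>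
      (mul_comm _ _).trans (div_eq_mul_inv _ _).symm)
  rw [integral_sub hY1 hY0, integral_sub hT1int hT0int, h1, h0]
end

section
/- Under the instrumental variable assumptions (randomized instrument, exclusion restriction encoded via the potential-outcome consistency equations, monotonicity, relevance, and homogeneity), the average causal effect equals the Wald ratio: ( E[Y·1{Z=1}]/P(Z=1) − E[Y·1{Z=0}]/P(Z=0) ) / ( E[A·1{Z=1}]/P(Z=1) − E[A·1{Z=0}]/P(Z=0) ) = β, and β = E[Y_1 − Y_0]. -/
open MeasureTheory ProbabilityTheory Filter

/-- **Identification of the average causal effect by the Wald (IV) ratio.**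
Under consistency (`A = Z·A₁ + (1-Z)·A₀`, `Y = A·Y₁ + (1-A)·Y₀`), randomization of the
instrument (`Z ⫫ (A₀, A₁, Y₀, Y₁)`), monotonicity (`A₀ ≤ A₁` a.s.), relevance
(`E[A₁ - A₀] ≠ 0`), homogeneity (`Y₁ - Y₀ = β` a.s.), and positivity (`0 < P(Z=1) < 1`),
the Wald ratio equals `β` and `β = E[Y₁ - Y₀]`.
(Since `Z` is `{0,1}`-valued, `1{Z=1} = Z` and `1{Z=0} = 1 - Z`, and `P(Z=0) = 1 - ζ`.) -/
theorem iv_wald_identification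
    {Ω : Type*} [MeasurableSpace Ω]
    (Pr : Measure Ω) [IsProbabilityMeasure Pr]
    (Z : Ω → ℝ) (hZ : Measurable Z) (hZ01 : ∀ ω, Z ω = 0 ∨ Z ω = 1)
    (A0 A1 : Ω → ℝ) (hA0 : Measurable A0) (hA1 : Measurable A1)
    (hA001 : ∀ ω, A0 ω = 0 ∨ A0 ω = 1) (hA101 : ∀ ω, A1 ω = 0 ∨ A1 ω = 1)
    (Y0 Y1 : Ω → ℝ) (hY0m : Measurable Y0) (hY1m : Measurable Y1)
    (hY0 : Integrable Y0 Pr) (hY1 : Integrable Y1 Pr)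
    -- consistency
    (A : Ω → ℝ) (hAdef : A = fun ω => Z ω * A1 ω + (1 - Z ω) * A0 ω)
    (Y : Ω → ℝ) (hYdef : Y = fun ω => A ω * Y1 ω + (1 - A ω) * Y0 ω)
    -- randomization: Z is independent of (A₀, A₁, Y₀, Y₁)
    (hrand : IndepFun Z (fun ω => (A0 ω, A1 ω, Y0 ω, Y1 ω)) Pr)
    -- monotonicity
    (hmono : ∀ᵐ ω ∂Pr, A0 ω ≤ A1 ω)
    -- relevance
    (hrel : ∫ ω, (A1 ω - A0 ω) ∂Pr ≠ 0)
    -- homogeneity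
    (β : ℝ) (hhom : ∀ᵐ ω ∂Pr, Y1 ω - Y0 ω = β)
    -- positivity
    (ζ : ℝ) (hζ : ζ = (Pr {ω | Z ω = 1}).toReal) (hζ0 : 0 < ζ) (hζ1 : ζ < 1) :
    ((∫ ω, Y ω * Z ω ∂Pr) / ζ - (∫ ω, Y ω * (1 - Z ω) ∂Pr) / (1 - ζ))
        / ((∫ ω, A ω * Z ω ∂Pr) / ζ - (∫ ω, A ω * (1 - Z ω) ∂Pr) / (1 - ζ)) = β
      ∧ β = ∫ ω, (Y1 ω - Y0 ω) ∂Pr := by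
  classical
  have hZbd : ∀ ω, ‖Z ω‖ ≤ 1 := by
    intro ω; rcases hZ01 ω with h | h <;> simp [h]
  have hA0bd : ∀ ω, ‖A0 ω‖ ≤ 1 := by
    intro ω; rcases hA001 ω with h | h <;> simp [h]
  have hA1bd : ∀ ω, ‖A1 ω‖ ≤ 1 := by
    intro ω; rcases hA101 ω with h | h <;> simp [h]
  have h1Zbd : ∀ ω, ‖1 - Z ω‖ ≤ 2 := by
    intro ω; rcases hZ01 ω with h | h <;> simp [h] <;> norm_num
  have hZint : Integrable Z Pr := by
    have := (integrable_const (μ := Pr) (1:ℝ)).bdd_mul hZ.aestronglyMeasurable (ae_of_all _ hZbd)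
    simpa using this
  have hA0int : Integrable A0 Pr := by
    have := (integrable_const (μ := Pr) (1:ℝ)).bdd_mul hA0.aestronglyMeasurable (ae_of_all _ hA0bd)
    simpa using this
  have hA1int : Integrable A1 Pr := by
    have := (integrable_const (μ := Pr) (1:ℝ)).bdd_mul hA1.aestronglyMeasurable (ae_of_all _ hA1bd)
    simpa using this
  -- helper: integrable times bounded
  have mulbdd : ∀ {f g : Ω → ℝ} (_ : Integrable f Pr) (_ : AEStronglyMeasurable g Pr)
      (c : ℝ) (_ : ∀ x, ‖g x‖ ≤ c), Integrable (fun x => f x * g x) Pr := by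
    intro f g hf hg c hb
    have := hf.bdd_mul hg (ae_of_all _ hb)
    simpa [mul_comm] using this
  -- ∫ Z = ζ
  have hs : MeasurableSet {ω | Z ω = 1} := hZ (measurableSet_singleton 1)
  have hEZ : ∫ ω, Z ω ∂Pr = ζ := by
    have hcong : ∫ ω, Z ω ∂Pr
        = ∫ ω, Set.indicator {ω | Z ω = 1} (fun _ => (1:ℝ)) ω ∂Pr := by
      refine integral_congr_ae (ae_of_all _ fun ω => ?_)
      rcases hZ01 ω with h | h
      · simp [Set.indicator, h, Set.mem_setOf_eq]
      · simp [Set.indicator, h, Set.mem_setOf_eq]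
    rw [hcong, integral_indicator_const (1:ℝ) hs, hζ, smul_eq_mul, mul_one, measureReal_def]
  -- independence of Z with each component
  have hZA0 : IndepFun Z A0 Pr :=
    hrand.comp measurable_id measurable_fst
  have hZA1 : IndepFun Z A1 Pr :=
    hrand.comp measurable_id (measurable_fst.comp measurable_snd)
  have hZY0 : IndepFun Z Y0 Pr :=
    hrand.comp measurable_id ((measurable_fst.comp measurable_snd).comp measurable_snd)
  -- key product integrals
  have hZY0i : ∫ ω, Z ω * Y0 ω ∂Pr = ζ * ∫ ω, Y0 ω ∂Pr := by
    have := hZY0.integral_mul_eq_mul_integral hZint.aestronglyMeasurable hY0.aestronglyMeasurable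
    simpa [Pi.mul_apply, hEZ] using this
  have hZA0i : ∫ ω, Z ω * A0 ω ∂Pr = ζ * ∫ ω, A0 ω ∂Pr := by
    have := hZA0.integral_mul_eq_mul_integral hZint.aestronglyMeasurable hA0int.aestronglyMeasurable
    simpa [Pi.mul_apply, hEZ] using this
  have hZA1i : ∫ ω, Z ω * A1 ω ∂Pr = ζ * ∫ ω, A1 ω ∂Pr := by
    have := hZA1.integral_mul_eq_mul_integral hZint.aestronglyMeasurable hA1int.aestronglyMeasurable
    simpa [Pi.mul_apply, hEZ] using this
  -- pointwise simplifications
  have hAZ : ∀ ω, A ω * Z ω = Z ω * A1 ω := by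
    intro ω; rw [hAdef]; rcases hZ01 ω with h | h <;> simp [h] <;> ring
  have hA1Z : ∀ ω, A ω * (1 - Z ω) = (1 - Z ω) * A0 ω := by
    intro ω; rw [hAdef]; rcases hZ01 ω with h | h <;> simp [h] <;> ring
  -- Y = Y0 + β A a.e.
  have hYae : ∀ᵐ ω ∂Pr, Y ω = Y0 ω + β * A ω := by
    filter_upwards [hhom] with ω hω
    rw [hYdef]; simp only
    have : Y1 ω = Y0 ω + β := by linarith
    rw [this]; ring
  have hAint : Integrable A Pr := by
    rw [hAdef]
    exact ((hA1int.bdd_mul hZ.aestronglyMeasurable (ae_of_all _ hZbd))).add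
      (hA0int.bdd_mul ((measurable_const.sub hZ).aestronglyMeasurable) (ae_of_all _ h1Zbd))
  -- ∫ A Z and ∫ A (1-Z)
  have hIAZ : ∫ ω, A ω * Z ω ∂Pr = ζ * ∫ ω, A1 ω ∂Pr := by
    rw [integral_congr_ae (ae_of_all _ hAZ)]; exact hZA1i
  have hIAZ' : ∫ ω, A ω * (1 - Z ω) ∂Pr = (1 - ζ) * ∫ ω, A0 ω ∂Pr := by
    have h1 : ∀ ω, (1 - Z ω) * A0 ω = A0 ω - Z ω * A0 ω := fun ω => by ring
    rw [integral_congr_ae (ae_of_all _ hA1Z)]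
    simp_rw [h1]
    rw [integral_sub hA0int
      (mulbdd hA0int hZ.aestronglyMeasurable 1 hZbd |>.congr
        (ae_of_all _ fun ω => by ring)), hZA0i]
    ring
  -- integrability of the various products
  have hYZint : Integrable (fun ω => Y0 ω * Z ω) Pr :=
    mulbdd hY0 hZ.aestronglyMeasurable 1 hZbd
  have hZY0int : Integrable (fun ω => Z ω * Y0 ω) Pr := by
    have := hYZint; simpa [mul_comm] using this
  have hAZint : Integrable (fun ω => A ω * Z ω) Pr :=
    mulbdd hAint hZ.aestronglyMeasurable 1 hZbd
  have hIYZ : ∫ ω, Y ω * Z ω ∂Pr = ζ * ∫ ω, Y0 ω ∂Pr + β * (ζ * ∫ ω, A1 ω ∂Pr) := by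
    have h : ∀ᵐ ω ∂Pr, Y ω * Z ω = Y0 ω * Z ω + β * (A ω * Z ω) := by
      filter_upwards [hYae] with ω hω; rw [hω]; ring
    rw [integral_congr_ae h, integral_add hYZint (hAZint.const_mul β),
      integral_const_mul, hIAZ]
    congr 1
    rw [show (∫ a, Y0 a * Z a ∂Pr) = ∫ a, Z a * Y0 a ∂Pr from
      integral_congr_ae (ae_of_all _ fun a => by ring)]
    exact hZY0i
  have hY1Zint : Integrable (fun ω => Y0 ω * (1 - Z ω)) Pr :=
    mulbdd hY0 ((measurable_const.sub hZ).aestronglyMeasurable) 2 h1Zbd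
  have hA1Zint : Integrable (fun ω => A ω * (1 - Z ω)) Pr :=
    mulbdd hAint ((measurable_const.sub hZ).aestronglyMeasurable) 2 h1Zbd
  have hIY1Z : ∫ ω, Y ω * (1 - Z ω) ∂Pr
      = (1 - ζ) * ∫ ω, Y0 ω ∂Pr + β * ((1 - ζ) * ∫ ω, A0 ω ∂Pr) := by
    have h : ∀ᵐ ω ∂Pr, Y ω * (1 - Z ω) = Y0 ω * (1 - Z ω) + β * (A ω * (1 - Z ω)) := by
      filter_upwards [hYae] with ω hω; rw [hω]; ring
    rw [integral_congr_ae h, integral_add hY1Zint (hA1Zint.const_mul β),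
      integral_const_mul, hIAZ']
    congr 1
    rw [show (∫ a, Y0 a * (1 - Z a) ∂Pr) = ∫ a, (Y0 a - Z a * Y0 a) ∂Pr from
      integral_congr_ae (ae_of_all _ fun a => by ring),
      integral_sub hY0 hZY0int, hZY0i]
    ring
  -- relevance
  have hD : ∫ ω, A1 ω ∂Pr - ∫ ω, A0 ω ∂Pr ≠ 0 := by
    rwa [← integral_sub hA1int hA0int]
  have hζ0' : ζ ≠ 0 := ne_of_gt hζ0
  have hζ1' : (1 : ℝ) - ζ ≠ 0 := by intro h; linarith
  constructor
  · rw [hIYZ, hIY1Z, hIAZ, hIAZ']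
    have e0 : ∀ (c x : ℝ), c ≠ 0 → c * x / c = x := by
      intro c x hc; rw [mul_comm, mul_div_assoc, div_self hc, mul_one]
    have e1 : (ζ * (∫ ω, Y0 ω ∂Pr) + β * (ζ * ∫ ω, A1 ω ∂Pr)) / ζ
        = (∫ ω, Y0 ω ∂Pr) + β * ∫ ω, A1 ω ∂Pr := by
      rw [show ζ * (∫ ω, Y0 ω ∂Pr) + β * (ζ * ∫ ω, A1 ω ∂Pr)
          = ζ * ((∫ ω, Y0 ω ∂Pr) + β * ∫ ω, A1 ω ∂Pr) from by ring]
      exact e0 _ _ hζ0'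
    have e2 : ((1 - ζ) * (∫ ω, Y0 ω ∂Pr) + β * ((1 - ζ) * ∫ ω, A0 ω ∂Pr)) / (1 - ζ)
        = (∫ ω, Y0 ω ∂Pr) + β * ∫ ω, A0 ω ∂Pr := by
      rw [show (1 - ζ) * (∫ ω, Y0 ω ∂Pr) + β * ((1 - ζ) * ∫ ω, A0 ω ∂Pr)
          = (1 - ζ) * ((∫ ω, Y0 ω ∂Pr) + β * ∫ ω, A0 ω ∂Pr) from by ring]
      exact e0 _ _ hζ1'
    rw [e1, e2, e0 _ _ hζ0', e0 _ _ hζ1',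
      show (∫ ω, Y0 ω ∂Pr) + β * (∫ ω, A1 ω ∂Pr)
          - ((∫ ω, Y0 ω ∂Pr) + β * ∫ ω, A0 ω ∂Pr)
          = β * ((∫ ω, A1 ω ∂Pr) - ∫ ω, A0 ω ∂Pr) from by ring,
      mul_div_assoc, div_self hD, mul_one]
  · rw [integral_congr_ae hhom, integral_const]
    simp
end
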